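/- arXiv:2110.12120 — 6 statements merged into one kernel-verified Lean document; each statement's English description precedes it below -/
import Mathlib

section
/- Let K ⊆ ℝ^n = ℝ^{n_1} × ⋯ × ℝ^{n_N} be a finite set such that every z = (z_1,…,z_N) ∈ K is feasible, i.e., z_i ∈ X_i(z_{-i}) for each i. Then for every u ∈ K, every player index i ∈ {1,…,N}, and every v_i ∈ X_i(u_{-i}), there exists a polynomial map p : ℝ^n → ℝ^{n_i} (each component a real polynomial in the n variables) such that p(u) = v_i and p(x) ∈ X_i(x_{-i}) for every x ∈ K. (Theorem 4.1: when the KKT set is finite, a feasible extension always exists and can be chosen to be a polynomial vector function.) -/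
/-- Lagrange-style interpolation: given a finite set `S` of points of type `α`,
a coordinate map `c : α → σ → ℝ` injective on `S`, and values `f : α → ℝ`,
there is a multivariate polynomial evaluating to `f a` at `c a` for all `a ∈ S`. -/
lemma mv_interpolate {α σ : Type*} (S : Finset α) (c : α → σ → ℝ)
    (hc : ∀ a ∈ S, ∀ b ∈ S, c a = c b → a = b) (f : α → ℝ) :
    ∃ P : MvPolynomial σ ℝ, ∀ a ∈ S, MvPolynomial.eval (c a) P = f a := by
  classical
  -- basic separating polynomial
  set ℓ : α → α → MvPolynomial σ ℝ := fun a b =>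
    if h : ∃ s, c a s ≠ c b s then
      MvPolynomial.C ((c a h.choose - c b h.choose)⁻¹) *
        (MvPolynomial.X h.choose - MvPolynomial.C (c b h.choose))
    else 1 with hℓ
  have heval_self : ∀ a b, c a ≠ c b → MvPolynomial.eval (c a) (ℓ a b) = 1 := by
    intro a b hab
    have h : ∃ s, c a s ≠ c b s := by
      by_contra hcon; push_neg at hcon; exact hab (funext hcon)
    have hs := h.choose_spec
    simp only [hℓ, dif_pos h, map_mul, MvPolynomial.eval_C, map_sub, MvPolynomial.eval_X]
    field_simp [sub_ne_zero.mpr hs]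
  have heval_other : ∀ a b, c a ≠ c b → MvPolynomial.eval (c b) (ℓ a b) = 0 := by
    intro a b hab
    have h : ∃ s, c a s ≠ c b s := by
      by_contra hcon; push_neg at hcon; exact hab (funext hcon)
    simp [hℓ, dif_pos h]
  refine ⟨∑ a ∈ S, MvPolynomial.C (f a) * ∏ b ∈ S.erase a, ℓ a b, ?_⟩
  intro a ha
  rw [map_sum, Finset.sum_eq_single a]
  · rw [map_mul, MvPolynomial.eval_C, map_prod]
    have : ∀ b ∈ S.erase a, MvPolynomial.eval (c a) (ℓ a b) = 1 := by
      intro b hb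
      have hba : b ≠ a := Finset.ne_of_mem_erase hb
      exact heval_self a b (fun hcab => hba ((hc b (Finset.mem_of_mem_erase hb) a ha hcab.symm)))
    rw [Finset.prod_congr rfl this]
    simp
  · intro b hb hba
    rw [map_mul, map_prod]
    have hcba : c b ≠ c a := fun hcab => hba (hc b hb a ha hcab)
    have hmem : a ∈ S.erase b := Finset.mem_erase.mpr ⟨fun h => hba h.symm, ha⟩
    rw [Finset.prod_eq_zero hmem (heval_other b a hcba)]
    ring
  · intro h; exact absurd ha h


/- STATEMENT 3 (Theorem 4.1): if the (feasible) set K is finite, then for every u ∈ K,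
player i, and v_i ∈ X_i(u_{-i}), there is a polynomial map p : ℝ^n → ℝ^{n_i}
(each component a real polynomial in the n = n_1 + ⋯ + n_N variables) with
p(u) = v_i and p(x) ∈ X_i(x_{-i}) for all x ∈ K. -/

theorem stmt3
    {N : ℕ} {n : Fin N → ℕ}
    (X : ∀ i : Fin N, (∀ j, EuclideanSpace ℝ (Fin (n j))) → Set (EuclideanSpace ℝ (Fin (n i))))
    (hX : ∀ i x y, (∀ j, j ≠ i → x j = y j) → X i x = X i y)
    (K : Set (∀ j, EuclideanSpace ℝ (Fin (n j))))
    (hKfin : K.Finite)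
    (hKfeas : ∀ z ∈ K, ∀ i, z i ∈ X i z)
    (u : ∀ j, EuclideanSpace ℝ (Fin (n j))) (hu : u ∈ K)
    (i : Fin N) (v : EuclideanSpace ℝ (Fin (n i))) (hv : v ∈ X i u) :
    ∃ q : Fin (n i) → MvPolynomial ((j : Fin N) × Fin (n j)) ℝ,
      (WithLp.toLp 2 (fun t => MvPolynomial.eval (fun s => u s.1 s.2) (q t)) : EuclideanSpace ℝ (Fin (n i)))
        = v ∧
      ∀ x ∈ K,
        (WithLp.toLp 2 (fun t => MvPolynomial.eval (fun s => x s.1 s.2) (q t)) : EuclideanSpace ℝ (Fin (n i)))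
          ∈ X i x := by
  classical
  set c : (∀ j, EuclideanSpace ℝ (Fin (n j))) → ((j : Fin N) × Fin (n j)) → ℝ :=
    fun x s => x s.1 s.2 with hcdef
  have hcinj : ∀ a ∈ hKfin.toFinset, ∀ b ∈ hKfin.toFinset, c a = c b → a = b := by
    intro a _ b _ hab
    funext j
    ext s
    exact congrFun hab ⟨j, s⟩
  set f : (∀ j, EuclideanSpace ℝ (Fin (n j))) → EuclideanSpace ℝ (Fin (n i)) :=
    fun z => if z = u then v else z i with hfdef
  have hP : ∀ t : Fin (n i), ∃ P : MvPolynomial ((j : Fin N) × Fin (n j)) ℝ,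
      ∀ a ∈ hKfin.toFinset, MvPolynomial.eval (c a) P = f a t := by
    intro t
    exact mv_interpolate hKfin.toFinset c hcinj (fun z => f z t)
  choose q hq using hP
  have key : ∀ x ∈ K,
      (WithLp.toLp 2 (fun t => MvPolynomial.eval (fun s => x s.1 s.2) (q t)) : EuclideanSpace ℝ (Fin (n i)))
        = f x := by
    intro x hx
    ext t
    exact hq t x (hKfin.mem_toFinset.mpr hx)
  refine ⟨q, ?_, ?_⟩
  · rw [key u hu]
    simp [hfdef]
  · intro x hx
    rw [key x hx]
    by_cases hxu : x = u
    · subst hxu; simpa [hfdef] using hv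
    · simpa [hfdef, hxu] using hKfeas x hx i
end

section
/- Let K₁ ⊆ ℝ^n and a₁, a₂ : ℝ^n → ℝ with a₂(x) ≥ 0 for all x ∈ K₁. Let z₁,…,z_r ∈ K₁ and μ₁,…,μ_r > 0 satisfy Σ_{j=1}^r μ_j a₂(z_j) = 1, and set v := Σ_{j=1}^r μ_j a₁(z_j). Assume: (i) for every choice of scalars ν₁,…,ν_r ≥ 0 with Σ_j ν_j a₂(z_j) = 1 one has v ≤ Σ_j ν_j a₁(z_j); and (ii) v ≤ a₁(x)/a₂(x) for every x ∈ K₁ with a₂(x) > 0. Then for every index j with a₂(z_j) > 0 (and at least one such j exists), the point z_j is a minimizer of a₁/a₂ over {x ∈ K₁ : a₂(x) > 0}, and a₁(z_j)/a₂(z_j) = v. (This is the extraction step of Theorem 5.1: when flat truncation holds, each atom of the optimal truncated moment sequence with positive denominator value is a minimizer of the rational optimization problem.) -/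
/- STATEMENT 4 (extraction step of Theorem 5.1): atoms of the optimal truncated moment
sequence with positive denominator value are minimizers of the rational objective a₁/a₂
over {x ∈ K₁ : a₂(x) > 0}, with optimal value v. -/

theorem stmt4 {n r : ℕ} (K₁ : Set (Fin n → ℝ)) (a₁ a₂ : (Fin n → ℝ) → ℝ)
    (ha₂ : ∀ x ∈ K₁, 0 ≤ a₂ x)
    (z : Fin r → (Fin n → ℝ)) (μ : Fin r → ℝ)
    (hz : ∀ j, z j ∈ K₁) (hμ : ∀ j, 0 < μ j)
    (hsum : ∑ j, μ j * a₂ (z j) = 1)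
    (v : ℝ) (hv : v = ∑ j, μ j * a₁ (z j))
    -- (i) optimality among reweightings of the atoms
    (hopt : ∀ ν : Fin r → ℝ, (∀ j, 0 ≤ ν j) → (∑ j, ν j * a₂ (z j)) = 1 →
      v ≤ ∑ j, ν j * a₁ (z j))
    -- (ii) the relaxation value is a lower bound for the true minimum
    (hlb : ∀ x ∈ K₁, 0 < a₂ x → v ≤ a₁ x / a₂ x) :
    (∃ j, 0 < a₂ (z j)) ∧
    ∀ j, 0 < a₂ (z j) →
      a₁ (z j) / a₂ (z j) = v ∧
      ∀ x ∈ K₁, 0 < a₂ x → a₁ (z j) / a₂ (z j) ≤ a₁ x / a₂ x := by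
  have hex : ∃ j, 0 < a₂ (z j) := by
    by_contra h
    push_neg at h
    have hzero : ∀ j, a₂ (z j) = 0 := fun j => le_antisymm (h j) (ha₂ _ (hz j))
    simp [hzero] at hsum
  refine ⟨hex, fun j hj => ?_⟩
  have hge : v ≤ a₁ (z j) / a₂ (z j) := hlb _ (hz j) hj
  have hμj := hμ j
  -- single-atom weight is at most 1
  have hone : μ j * a₂ (z j) ≤ 1 := by
    rw [← hsum]
    exact Finset.single_le_sum (f := fun k => μ k * a₂ (z k))
      (fun k _ => mul_nonneg (hμ k).le (ha₂ _ (hz k))) (Finset.mem_univ j)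
  set ε := μ j * a₂ (z j) with hε
  have hεpos : 0 < ε := mul_pos hμj hj
  set ν : Fin r → ℝ := fun k => if k = j then (1 + ε) * μ k - ε / a₂ (z j) else (1 + ε) * μ k
    with hν
  have hνnn : ∀ k, 0 ≤ ν k := by
    intro k
    by_cases hk : k = j
    · subst hk
      have : ε / a₂ (z k) ≤ (1 + ε) * μ k := by
        rw [div_le_iff₀ hj]
        nlinarith
      simp only [hν, if_pos rfl]
      linarith
    · simp only [hν, if_neg hk]
      have : (0:ℝ) ≤ 1 + ε := by linarith
      exact mul_nonneg this (hμ k).le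
  have key2 : ∀ k, ν k * a₂ (z k) = (1 + ε) * (μ k * a₂ (z k)) - (if k = j then ε else 0) := by
    intro k
    by_cases hk : k = j
    · subst hk
      simp only [hν, if_pos rfl]
      field_simp
      rw [if_pos trivial]
    · simp only [hν, if_neg hk]
      ring
  have key1 : ∀ k, ν k * a₁ (z k) =
      (1 + ε) * (μ k * a₁ (z k)) - (if k = j then ε * (a₁ (z j) / a₂ (z j)) else 0) := by
    intro k
    by_cases hk : k = j
    · subst hk
      simp only [hν, if_pos rfl, hε]
      field_simp
      rw [if_pos trivial]
      ring
    · simp only [hν, if_neg hk]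
      ring
  have hνsum : ∑ k, ν k * a₂ (z k) = 1 := by
    simp only [key2, Finset.sum_sub_distrib, ← Finset.mul_sum, hsum,
      Finset.sum_ite_eq', Finset.mem_univ, if_pos]
    ring
  have hlem := hopt ν hνnn hνsum
  rw [show ∑ k, ν k * a₁ (z k) = (1 + ε) * v - ε * (a₁ (z j) / a₂ (z j)) by
    simp only [key1, Finset.sum_sub_distrib, ← Finset.mul_sum, ← hv,
      Finset.sum_ite_eq', Finset.mem_univ, if_pos]] at hlem
  have hle : a₁ (z j) / a₂ (z j) ≤ v := by nlinarith
  exact ⟨le_antisymm hle hge, fun x hx hax => le_trans (le_of_eq (le_antisymm hle hge)) (hlb x hx hax)⟩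
end

section
/- Let W ⊆ ℝ^m, let b : W → ℝ and a, c : W → ℝ^{s} be functions with c_j(w) > 0 for all w ∈ W and all j, and let d ∈ ℝ^{s} be a constant vector with all entries positive. For w ∈ W define the simplex-type set X(w) := { y ∈ ℝ^{s} : dᵀy ≤ b(w) and c_j(w)·y_j ≥ a_j(w) for every j }. Given w₀ ∈ W and v ∈ X(w₀), there exists a vector μ ∈ ℝ^{s} with μ ≥ 0 and Σ_j d_j μ_j ≤ 1 such that the map p(w) := ( μ_j·(b(w) − Σ_k d_k a_k(w)/c_k(w)) + a_j(w)/c_j(w) )_{j=1}^{s} satisfies p(w₀) = v and p(w) ∈ X(w) for every w ∈ W with b(w) ≥ Σ_k d_k a_k(w)/c_k(w) (i.e., whenever X(w) is nonempty). -/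
/- STATEMENT 8: explicit feasible extension (4.2) for simplex-type constraints
X(w) = { y : dᵀy ≤ b(w), c_j(w)·y_j ≥ a_j(w) ∀ j }. -/

lemma stmt8_aux {m s : ℕ} (W : Set (Fin m → ℝ))
    (b : (Fin m → ℝ) → ℝ) (a c : (Fin m → ℝ) → Fin s → ℝ) (d : Fin s → ℝ)
    (hc : ∀ w ∈ W, ∀ j, 0 < c w j) (hd : ∀ j, 0 < d j)
    (μ : Fin s → ℝ) (hμ : ∀ j, 0 ≤ μ j) (hμs : (∑ j, d j * μ j) ≤ 1) :
    ∀ w ∈ W, (∑ k, d k * (a w k / c w k)) ≤ b w →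
        (∑ j, d j * (μ j * (b w - ∑ k, d k * (a w k / c w k)) + a w j / c w j)) ≤ b w ∧
        ∀ j, a w j ≤ c w j * (μ j * (b w - ∑ k, d k * (a w k / c w k)) + a w j / c w j) := by
  intro w hw hXw
  set R : ℝ := b w - ∑ k, d k * (a w k / c w k) with hR
  have hR0 : 0 ≤ R := by simp [hR]; linarith
  constructor
  · have : (∑ j, d j * (μ j * R + a w j / c w j))
        = (∑ j, d j * μ j) * R + ∑ j, d j * (a w j / c w j) := by
      rw [Finset.sum_mul, ← Finset.sum_add_distrib]
      apply Finset.sum_congr rfl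
      intro j _; ring
    rw [this]
    have h1 : (∑ j, d j * μ j) * R ≤ 1 * R := mul_le_mul_of_nonneg_right hμs hR0
    nlinarith
  · intro j
    have hcj := hc w hw j
    have : c w j * (μ j * R + a w j / c w j) = c w j * (μ j * R) + a w j := by
      field_simp
    rw [this]
    nlinarith [mul_nonneg hcj.le (mul_nonneg (hμ j) hR0)]

theorem stmt8 {m s : ℕ} (W : Set (Fin m → ℝ))
    (b : (Fin m → ℝ) → ℝ) (a c : (Fin m → ℝ) → Fin s → ℝ) (d : Fin s → ℝ)
    (hc : ∀ w ∈ W, ∀ j, 0 < c w j) (hd : ∀ j, 0 < d j)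
    (w₀ : Fin m → ℝ) (hw₀ : w₀ ∈ W)
    (v : Fin s → ℝ)
    (hv : (∑ j, d j * v j) ≤ b w₀ ∧ ∀ j, a w₀ j ≤ c w₀ j * v j) :
    ∃ μ : Fin s → ℝ, (∀ j, 0 ≤ μ j) ∧ (∑ j, d j * μ j) ≤ 1 ∧
      -- p(w₀) = v
      (∀ j, μ j * (b w₀ - ∑ k, d k * (a w₀ k / c w₀ k)) + a w₀ j / c w₀ j = v j) ∧
      -- p(w) ∈ X(w) whenever X(w) is nonempty
      ∀ w ∈ W, (∑ k, d k * (a w k / c w k)) ≤ b w →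
        (∑ j, d j * (μ j * (b w - ∑ k, d k * (a w k / c w k)) + a w j / c w j)) ≤ b w ∧
        ∀ j, a w j ≤ c w j * (μ j * (b w - ∑ k, d k * (a w k / c w k)) + a w j / c w j) := by
  obtain ⟨hv1, hv2⟩ := hv
  have hdc : ∀ j, a w₀ j / c w₀ j ≤ v j := by
    intro j
    rw [div_le_iff₀ (hc w₀ hw₀ j)]
    linarith [hv2 j]
  set r : ℝ := b w₀ - ∑ k, d k * (a w₀ k / c w₀ k) with hr
  have hsum_le : (∑ k, d k * (a w₀ k / c w₀ k)) ≤ ∑ k, d k * v k := by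
    apply Finset.sum_le_sum
    intro k _
    exact mul_le_mul_of_nonneg_left (hdc k) (hd k).le
  have hr0 : 0 ≤ r := by simp only [hr]; linarith
  rcases eq_or_lt_of_le hr0 with hre | hrp
  · -- r = 0 : each v j = a/c, take μ = 0
    have hz : ∑ k, d k * (v k - a w₀ k / c w₀ k) ≤ 0 := by
      have heq : ∑ k, d k * (v k - a w₀ k / c w₀ k)
          = (∑ k, d k * v k) - ∑ k, d k * (a w₀ k / c w₀ k) := by
        rw [← Finset.sum_sub_distrib]
        apply Finset.sum_congr rfl
        intro k _; ring
      have hb : b w₀ = ∑ k, d k * (a w₀ k / c w₀ k) := by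
        simp only [hr] at hre; linarith
      rw [heq]; linarith
    have heach : ∀ j, v j = a w₀ j / c w₀ j := by
      intro j
      by_contra hne
      have hlt : 0 < d j * (v j - a w₀ j / c w₀ j) := by
        have : a w₀ j / c w₀ j < v j := lt_of_le_of_ne (hdc j) (fun h => hne h.symm)
        exact mul_pos (hd j) (by linarith)
      have hnn : ∀ k ∈ Finset.univ, (0:ℝ) ≤ d k * (v k - a w₀ k / c w₀ k) := by
        intro k _
        exact mul_nonneg (hd k).le (by linarith [hdc k])
      have hpos : 0 < ∑ k, d k * (v k - a w₀ k / c w₀ k) :=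
        Finset.sum_pos' hnn ⟨j, Finset.mem_univ j, hlt⟩
      linarith
    refine ⟨0, fun j => le_refl 0, by simp, ?_, ?_⟩
    · intro j; simp [heach j]
    · exact stmt8_aux W b a c d hc hd 0 (fun j => le_refl 0) (by simp)
  · -- r > 0
    set μ : Fin s → ℝ := fun j => (v j - a w₀ j / c w₀ j) / r with hμdef
    have hμ0 : ∀ j, 0 ≤ μ j := fun j => div_nonneg (by linarith [hdc j]) hr0
    have hμs : (∑ j, d j * μ j) ≤ 1 := by
      have heq : ∑ j, d j * μ j = (∑ j, d j * (v j - a w₀ j / c w₀ j)) / r := by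
        rw [Finset.sum_div]
        exact Finset.sum_congr rfl (fun j _ => by rw [hμdef]; ring)
      rw [heq, div_le_one hrp]
      have h2 : ∑ j, d j * (v j - a w₀ j / c w₀ j)
          = (∑ j, d j * v j) - ∑ j, d j * (a w₀ j / c w₀ j) := by
        rw [← Finset.sum_sub_distrib]
        apply Finset.sum_congr rfl
        intro j _; ring
      rw [h2]; simp only [hr]; linarith
    refine ⟨μ, hμ0, hμs, ?_, stmt8_aux W b a c d hc hd μ hμ0 hμs⟩
    intro j
    simp only [hμdef, ← hr]
    field_simp
    ring
end

section
/- Let W ⊆ ℝ^m, let a, c : W → ℝ^{s} and R : W → ℝ be functions with a_j(w) ≠ 0 for all w ∈ W and all j, and for w ∈ W define the ball-type set X(w) := { y ∈ ℝ^{s} : Σ_{j=1}^{s} ( a_j(w)·y_j − c_j(w) )² ≤ R(w)² }. Given w₀ ∈ W with R(w₀) ≥ 0 and v ∈ X(w₀), there exist a scalar μ ∈ [0,1] and a vector s ∈ ℝ^{s} with ‖s‖ = 1 such that the map p(w) := ( ( c_j(w) + s_j·μ·R(w) ) / a_j(w) )_{j=1}^{s} satisfies p(w₀) = v and p(w) ∈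 X(w) for every w ∈ W. -/
/- STATEMENT 9: explicit feasible extension (4.3) for ball-type constraints
X(w) = { y : Σ_j (a_j(w)·y_j − c_j(w))² ≤ R(w)² }. -/

theorem stmt9 {m s : ℕ} (hs : 0 < s) (W : Set (Fin m → ℝ))
    (a c : (Fin m → ℝ) → Fin s → ℝ) (R : (Fin m → ℝ) → ℝ)
    (ha : ∀ w ∈ W, ∀ j, a w j ≠ 0)
    (w₀ : Fin m → ℝ) (hw₀ : w₀ ∈ W) (hR : 0 ≤ R w₀)
    (v : Fin s → ℝ)
    (hv : (∑ j, (a w₀ j * v j - c w₀ j) ^ 2) ≤ (R w₀) ^ 2) :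
    ∃ (μ : ℝ) (sv : Fin s → ℝ), 0 ≤ μ ∧ μ ≤ 1 ∧ (∑ j, (sv j) ^ 2) = 1 ∧
      -- p(w₀) = v
      (∀ j, (c w₀ j + sv j * μ * R w₀) / a w₀ j = v j) ∧
      -- p(w) ∈ X(w) for every w ∈ W
      ∀ w ∈ W,
        (∑ j, (a w j * ((c w j + sv j * μ * R w) / a w j) - c w j) ^ 2) ≤ (R w) ^ 2 := by
  have hkey : ∀ w ∈ W, ∀ j (x : ℝ), a w j * ((c w j + x) / a w j) - c w j = x := by
    intro w hw j x
    have := ha w hw j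
    field_simp
    ring
  -- the feasibility part only needs 0 ≤ μ ≤ 1 and ∑ sv² = 1
  have hfeas : ∀ (μ : ℝ) (sv : Fin s → ℝ), 0 ≤ μ → μ ≤ 1 → (∑ j, (sv j) ^ 2) = 1 →
      ∀ w ∈ W,
        (∑ j, (a w j * ((c w j + sv j * μ * R w) / a w j) - c w j) ^ 2) ≤ (R w) ^ 2 := by
    intro μ sv hμ0 hμ1 hsv w hw
    have h1 : (∑ j, (a w j * ((c w j + sv j * μ * R w) / a w j) - c w j) ^ 2)
        = μ ^ 2 * (R w) ^ 2 * ∑ j, (sv j) ^ 2 := by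
      rw [Finset.mul_sum]
      refine Finset.sum_congr rfl ?_
      intro j _
      rw [hkey w hw j]
      ring
    rw [h1, hsv, mul_one]
    have hμ2 : μ ^ 2 ≤ 1 := by nlinarith
    nlinarith [mul_nonneg (by nlinarith : (0:ℝ) ≤ 1 - μ ^ 2) (sq_nonneg (R w))]
  set t := Real.sqrt (∑ j, (a w₀ j * v j - c w₀ j) ^ 2) with ht
  have hsum_nonneg : 0 ≤ ∑ j, (a w₀ j * v j - c w₀ j) ^ 2 :=
    Finset.sum_nonneg fun j _ => sq_nonneg _
  by_cases h0 : (∑ j, (a w₀ j * v j - c w₀ j) ^ 2) = 0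
  · -- v is the center: μ = 0, sv any unit vector
    have hzero : ∀ j, a w₀ j * v j - c w₀ j = 0 := by
      intro j
      have := (Finset.sum_eq_zero_iff_of_nonneg (fun j _ => sq_nonneg _)).mp h0 j
        (Finset.mem_univ j)
      exact pow_eq_zero_iff (by norm_num) |>.mp this
    refine ⟨0, fun j => if j = ⟨0, hs⟩ then 1 else 0, le_refl 0, zero_le_one, ?_, ?_, ?_⟩
    · rw [Finset.sum_eq_single ⟨0, hs⟩]
      · simp
      · intro b _ hb; simp [hb]
      · simp
    · intro j
      have h := hzero j
      have haj := ha w₀ hw₀ j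
      field_simp
      linarith
    · exact hfeas 0 _ le_rfl zero_le_one (by
        rw [Finset.sum_eq_single ⟨0, hs⟩]
        · simp
        · intro b _ hb; simp [hb]
        · simp)
  · have ht0 : 0 < t := Real.sqrt_pos.mpr (lt_of_le_of_ne hsum_nonneg (Ne.symm h0))
    have ht2 : t ^ 2 = ∑ j, (a w₀ j * v j - c w₀ j) ^ 2 := Real.sq_sqrt hsum_nonneg
    have hRpos : 0 < R w₀ := by nlinarith
    refine ⟨t / R w₀, fun j => (a w₀ j * v j - c w₀ j) / t,
      div_nonneg ht0.le hRpos.le, ?_, ?_, ?_, ?_⟩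
    · rw [div_le_one hRpos]
      nlinarith
    · have : (∑ j, ((a w₀ j * v j - c w₀ j) / t) ^ 2)
          = (∑ j, (a w₀ j * v j - c w₀ j) ^ 2) / t ^ 2 := by
        rw [Finset.sum_div]
        exact Finset.sum_congr rfl fun j _ => by ring
      rw [this, ← ht2, div_self (by positivity)]
    · intro j
      have haj := ha w₀ hw₀ j
      have : c w₀ j + (a w₀ j * v j - c w₀ j) / t * (t / R w₀) * R w₀ = a w₀ j * v j := by
        field_simp
        ring
      rw [this, mul_comm, mul_div_assoc, div_self haj, mul_one]
    · refine hfeas _ _ (div_nonneg ht0.le hRpos.le) ?_ ?_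
      · rw [div_le_one hRpos]; nlinarith
      · have : (∑ j, ((a w₀ j * v j - c w₀ j) / t) ^ 2)
            = (∑ j, (a w₀ j * v j - c w₀ j) ^ 2) / t ^ 2 := by
          rw [Finset.sum_div]
          exact Finset.sum_congr rfl fun j _ => by ring
        rw [this, ← ht2, div_self (by positivity)]
end

section
/- Let T ⊆ ℝ^n be a compact set and d a positive integer. For u ∈ ℝ^n let [u]_d ∈ ℝ^{|ℕ_d^n|} denote the vector of all monomials u^α with |α| ≤ d (ordered in a fixed way, with the constant monomial 1 as a coordinate). Then the moment cone ℛ_d(T) := { Σ_{i=1}^{M} λ_i [u_i]_d : u_i ∈ T, λ_i ≥ 0, M ∈ ℕ } is a closed convex cone in ℝ^{|ℕ_d^n|}. -/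
/- STATEMENT 14: for compact T ⊆ ℝ^n and d > 0, the moment cone
ℛ_d(T) = { Σ λ_i [u_i]_d : u_i ∈ T, λ_i ≥ 0 } is a closed convex cone. -/

/-- The vector of all monomials u^α with |α| ≤ d of a point u ∈ ℝ^n. -/
noncomputable def monVec (n d : ℕ) (u : Fin n → ℝ) :
    {α : Fin n →₀ ℕ // (α.sum fun _ k => k) ≤ d} → ℝ :=
  fun α => ∏ i, u i ^ (α.1 i)

/-- The moment cone ℛ_d(T). -/
def MomentCone (n d : ℕ) (T : Set (Fin n → ℝ)) :
    Set ({α : Fin n →₀ ℕ // (α.sum fun _ k => k) ≤ d} → ℝ) :=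
  {y | ∃ (M : ℕ) (lam : Fin M → ℝ) (pts : Fin M → Fin n → ℝ),
    (∀ i, 0 ≤ lam i) ∧ (∀ i, pts i ∈ T) ∧ y = ∑ i, lam i • monVec n d (pts i)}

namespace Stmt14Aux

abbrev Idx (n d : ℕ) := {α : Fin n →₀ ℕ // (α.sum fun _ k => k) ≤ d}

lemma apply_le {n d : ℕ} (α : Idx n d) (i : Fin n) : α.1 i ≤ d := by
  classical
  have h : α.1 i ≤ α.1.sum fun _ k => k := by
    rw [Finsupp.sum]
    by_cases hi : i ∈ α.1.support
    · exact Finset.single_le_sum (fun j _ => Nat.zero_le (α.1 j)) hi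
    · simp [Finsupp.notMem_support_iff.mp hi]
  exact h.trans α.2

noncomputable instance {n d : ℕ} : Fintype (Idx n d) :=
  Fintype.ofInjective
    (fun α (i : Fin n) => (⟨α.1 i, Nat.lt_succ_of_le (apply_le α i)⟩ : Fin (d+1)))
    (fun _ _ hab => Subtype.ext (Finsupp.ext fun i => congrArg Fin.val (congrFun hab i)))

def e0 (n d : ℕ) : Idx n d := ⟨0, by simp⟩

lemma monVec_e0 {n d : ℕ} (u : Fin n → ℝ) : monVec n d u (e0 n d) = 1 := by
  simp [monVec, e0]

lemma monVec_continuous {n d : ℕ} : Continuous (monVec n d) :=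
  continuous_pi fun _ => continuous_finset_prod _ fun i _ => (continuous_apply i).pow _

/-- the uniform number of terms -/
noncomputable def mdim (n d : ℕ) : ℕ := Module.finrank ℝ (Idx n d → ℝ) + 1

/-- Carathéodory-type representation with exactly `mdim n d` terms. -/
lemma rep {n d : ℕ} {T : Set (Fin n → ℝ)} {u₀ : Fin n → ℝ} (hu₀ : u₀ ∈ T)
    {y : Idx n d → ℝ} (hy : y ∈ MomentCone n d T) :
    ∃ (lam : Fin (mdim n d) → ℝ) (pts : Fin (mdim n d) → Fin n → ℝ),
      (∀ i, 0 ≤ lam i) ∧ (∀ i, pts i ∈ T) ∧ y = ∑ i, lam i • monVec n d (pts i) := by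
  classical
  obtain ⟨M, lam, pts, hlam, hpts, rfl⟩ := hy
  set t : ℝ := ∑ i, lam i with ht
  rcases eq_or_lt_of_le (Finset.sum_nonneg fun i _ => hlam i) with h0 | hpos
  · -- all weights zero
    have hz : ∀ i ∈ Finset.univ, lam i = 0 :=
      (Finset.sum_eq_zero_iff_of_nonneg fun i _ => hlam i).mp h0.symm
    refine ⟨0, fun _ => u₀, fun _ => le_refl 0, fun _ => hu₀, ?_⟩
    rw [Finset.sum_eq_zero fun i hi => by rw [hz i hi, zero_smul],
      Finset.sum_eq_zero fun i _ => by rw [Pi.zero_apply, zero_smul]]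
  · -- positive total mass
    have htne : t ≠ 0 := ne_of_gt hpos
    set K : Set (Idx n d → ℝ) := monVec n d '' T with hK
    have hw : Finset.univ.centerMass lam (fun i => monVec n d (pts i)) ∈ convexHull ℝ K :=
      Finset.centerMass_mem_convexHull _ (fun i _ => hlam i) hpos
        (fun i _ => ⟨pts i, hpts i, rfl⟩)
    obtain ⟨ι, hι, z, c, hzr, hai, hcpos, hcsum, hzsum⟩ :=
      eq_pos_convex_span_of_mem_convexHull hw
    have hcard : Fintype.card ι ≤ mdim n d :=
      hai.card_le_finrank_succ.trans (by
        unfold mdim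
        exact Nat.add_le_add_right (Submodule.finrank_le _) 1)
    obtain ⟨e⟩ : Nonempty (ι ↪ Fin (mdim n d)) :=
      Function.Embedding.nonempty_of_card_le (by simpa using hcard)
    -- points realizing z
    have hzT : ∀ i : ι, ∃ u, u ∈ T ∧ monVec n d u = z i := fun i => hzr ⟨i, rfl⟩
    choose pt hptT hptz using hzT
    -- extend along the embedding
    set g : Fin (mdim n d) → ℝ × (Fin n → ℝ) :=
      Function.extend e (fun i => (t * c i, pt i)) (fun _ => (0, u₀)) with hg
    refine ⟨fun j => (g j).1, fun j => (g j).2, ?_, ?_, ?_⟩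
    · intro j
      rcases em (∃ i, e i = j) with ⟨i, rfl⟩ | hnot
      · simp only [hg, e.injective.extend_apply]
        exact mul_nonneg hpos.le (hcpos i).le
      · simp only [hg, Function.extend_apply' _ _ _ hnot]; exact le_refl 0
    · intro j
      rcases em (∃ i, e i = j) with ⟨i, rfl⟩ | hnot
      · simp only [hg, e.injective.extend_apply]; exact hptT i
      · simp only [hg, Function.extend_apply' _ _ _ hnot]; exact hu₀
    · -- sum identity
      have hvanish : ∀ j ∈ Finset.univ, j ∉ Finset.univ.map e →
          (g j).1 • monVec n d (g j).2 = 0 := by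
        intro j _ hj
        have hnot : ¬ ∃ i, e i = j := by
          rintro ⟨i, rfl⟩; exact hj (Finset.mem_map.mpr ⟨i, Finset.mem_univ i, rfl⟩)
        simp only [hg, Function.extend_apply' _ _ _ hnot, zero_smul]
      have hsum : ∑ j, (g j).1 • monVec n d (g j).2
          = ∑ i, (t * c i) • monVec n d (pt i) := by
        rw [← Finset.sum_subset (Finset.subset_univ (Finset.univ.map e)) hvanish,
          Finset.sum_map]
        refine Finset.sum_congr rfl fun i _ => ?_
        rw [hg]
        simp [e.injective.extend_apply]
      rw [hsum]
      have : ∑ i, (t * c i) • monVec n d (pt i) = t • ∑ i, c i • z i := by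
        rw [Finset.smul_sum]
        exact Finset.sum_congr rfl fun i _ => by rw [hptz, mul_smul]
      rw [this, hzsum, Finset.centerMass, ← ht, smul_smul, mul_inv_cancel₀ htne, one_smul]

end Stmt14Aux

open Stmt14Aux in
theorem stmt14 {n d : ℕ} (hd : 0 < d) (T : Set (Fin n → ℝ)) (hT : IsCompact T) :
    IsClosed (MomentCone n d T) ∧ Convex ℝ (MomentCone n d T) ∧
    ∀ c : ℝ, 0 ≤ c → ∀ y ∈ MomentCone n d T, c • y ∈ MomentCone n d T := by
  classical
  -- cone property
  have hcone : ∀ c : ℝ, 0 ≤ c → ∀ y ∈ MomentCone n d T, c • y ∈ MomentCone n d T := by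
    rintro c hc y ⟨M, lam, pts, hlam, hpts, rfl⟩
    refine ⟨M, fun i => c * lam i, pts, fun i => mul_nonneg hc (hlam i), hpts, ?_⟩
    rw [Finset.smul_sum]
    exact Finset.sum_congr rfl fun i _ => by rw [smul_smul]
  -- additivity
  have hadd : ∀ y ∈ MomentCone n d T, ∀ z ∈ MomentCone n d T, y + z ∈ MomentCone n d T := by
    rintro y ⟨M, lam, pts, hlam, hpts, rfl⟩ z ⟨N, mu, qts, hmu, hqts, rfl⟩
    refine ⟨M + N, Fin.append lam mu, Fin.append pts qts, ?_, ?_, ?_⟩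
    · intro i
      refine Fin.addCases (fun j => ?_) (fun j => ?_) i
      · rw [Fin.append_left]; exact hlam j
      · rw [Fin.append_right]; exact hmu j
    · intro i
      refine Fin.addCases (fun j => ?_) (fun j => ?_) i
      · rw [Fin.append_left]; exact hpts j
      · rw [Fin.append_right]; exact hqts j
    · rw [Fin.sum_univ_add]
      congr 1 <;> exact Finset.sum_congr rfl fun i _ => by
        simp [Fin.append_left, Fin.append_right]
  have hconv : Convex ℝ (MomentCone n d T) := by
    intro y hy z hz a b ha hb _
    exact hadd _ (hcone a ha y hy) _ (hcone b hb z hz)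
  refine ⟨?_, hconv, hcone⟩
  -- closedness
  rcases T.eq_empty_or_nonempty with rfl | ⟨u₀, hu₀⟩
  · have hMC : MomentCone n d (∅ : Set (Fin n → ℝ)) = {0} := by
      apply Set.Subset.antisymm
      · rintro y ⟨M, lam, pts, _, hpts, rfl⟩
        have : ∀ i ∈ (Finset.univ : Finset (Fin M)), lam i • monVec n d (pts i) = 0 :=
          fun i _ => absurd (hpts i) (Set.notMem_empty _)
        simp [Finset.sum_eq_zero this]
      · rintro y hy
        rw [Set.mem_singleton_iff] at hy
        exact ⟨0, Fin.elim0, Fin.elim0, fun i => i.elim0, fun i => i.elim0, by simp [hy]⟩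
    rw [hMC]
    exact isClosed_singleton
  · -- T nonempty: sequential argument
    set m := mdim n d with hm
    set F : (Fin m → ℝ) × (Fin m → Fin n → ℝ) → (Idx n d → ℝ) :=
      fun p => ∑ i, p.1 i • monVec n d (p.2 i) with hF
    have hFc : Continuous F := by
      apply continuous_finset_sum
      intro i _
      exact ((continuous_apply i).comp continuous_fst).smul
        (monVec_continuous.comp ((continuous_apply i).comp continuous_snd))
    apply IsSeqClosed.isClosed
    intro f y hfmem hfy
    choose lam pts hlam hpts hrep using fun k => rep hu₀ (hfmem k)
    have hte : ∀ k, f k (e0 n d) = ∑ i, lam k i := by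
      intro k
      rw [hrep k]
      simp [monVec_e0]
    have htt : Filter.Tendsto (fun k => f k (e0 n d)) Filter.atTop (nhds (y (e0 n d))) :=
      ((continuous_apply (e0 n d)).tendsto y).comp hfy
    obtain ⟨B, hB⟩ : BddAbove (Set.range fun k => f k (e0 n d)) := htt.bddAbove_range
    have hBk : ∀ k i, lam k i ≤ B := by
      intro k i
      have h1 : lam k i ≤ ∑ j, lam k j :=
        Finset.single_le_sum (fun j _ => hlam k j) (Finset.mem_univ i)
      exact h1.trans ((hte k).symm.le.trans (hB ⟨k, rfl⟩))
    set Q : Set ((Fin m → ℝ) × (Fin m → Fin n → ℝ)) :=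
      (Set.univ.pi fun _ => Set.Icc (0:ℝ) B) ×ˢ (Set.univ.pi fun _ => T) with hQdef
    have hQ : IsCompact Q :=
      (isCompact_univ_pi fun _ => isCompact_Icc).prod (isCompact_univ_pi fun _ => hT)
    have hmemQ : ∀ k, (lam k, pts k) ∈ Q := by
      intro k
      exact ⟨fun i _ => ⟨hlam k i, hBk k i⟩, fun i _ => hpts k i⟩
    obtain ⟨p, hpQ, φ, hφ, hφt⟩ := hQ.isSeqCompact hmemQ
    have h1 : Filter.Tendsto (fun j => F (lam (φ j), pts (φ j))) Filter.atTop (nhds (F p)) :=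
      (hFc.tendsto p).comp hφt
    have h2 : Filter.Tendsto (fun j => f (φ j)) Filter.atTop (nhds y) :=
      hfy.comp hφ.tendsto_atTop
    have h3 : (fun j => F (lam (φ j), pts (φ j))) = fun j => f (φ j) :=
      funext fun j => (hrep (φ j)).symm
    have hyF : y = F p := tendsto_nhds_unique h2 (h3 ▸ h1)
    exact ⟨m, p.1, p.2, fun i => (hpQ.1 i (Set.mem_univ i)).1,
      fun i => hpQ.2 i (Set.mem_univ i), hyF⟩
end

section
/- Let T ⊆ ℝ^n be a nonempty compact set and d a positive integer. For a vector y = (y_α)_{α ∈ ℕ_d^n} and a polynomial f = Σ_{α ∈ ℕ_d^n} f_α x^α of degree at most d, write ⟨f, y⟩ := Σ_α f_α y_α. Then y belongs to the moment cone ℛ_d(T) := { Σ_{i=1}^{M} λ_i [u_i]_d : u_i ∈ T, λ_i ≥ 0, M ∈ ℕ } if and only if ⟨f, y⟩ ≥ 0 for every polynomial f of degree at most d that is nonnegative on T. That is, for compact T, ℛ_d(T) equals the dual cone of the cone 𝒫_d(T) of polynomials of degree at most d that are nonnegative on T. -/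
/-- The pairing ⟨f, y⟩ = Σ_α f_α y_α between a polynomial of degree ≤ d and a
truncated multi-sequence. -/
noncomputable def pairing (n d : ℕ) (f : MvPolynomial (Fin n) ℝ)
    (y : {α : Fin n →₀ ℕ // (α.sum fun _ k => k) ≤ d} → ℝ) : ℝ :=
  ∑ α ∈ f.support, MvPolynomial.coeff α f *
    (if h : (α.sum fun _ k => k) ≤ d then y ⟨α, h⟩ else 0)

lemma pad_sum {ι : Type*} [Fintype ι] {N : ℕ} (hcard : Fintype.card ι ≤ N)
    {M : Type*} [AddCommMonoid M] (F : ι → M) :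
    (∑ i : Fin N, if h : (i : ℕ) < Fintype.card ι
      then F ((Fintype.equivFin ι).symm ⟨i, h⟩) else 0) = ∑ j : ι, F j := by
  classical
  set m := Fintype.card ι with hm
  set e := (Fintype.equivFin ι) with he
  set G : Fin N → M := fun i => if h : (i : ℕ) < m then F (e.symm ⟨i, h⟩) else 0 with hG
  have h1 : ∑ i : Fin N, G i
      = ∑ i ∈ Finset.univ.map ⟨Fin.castLE hcard, Fin.castLE_injective _⟩, G i := by
    refine (Finset.sum_subset (Finset.subset_univ _) ?_).symm
    intro i _ hi
    have hlt : ¬ (i : ℕ) < m := by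
      intro hlt
      exact hi (Finset.mem_map.2 ⟨⟨i, hlt⟩, Finset.mem_univ _, by ext; simp⟩)
    simp only [hG, dif_neg hlt]
  rw [show (∑ i : Fin N, if h : (i : ℕ) < m then F (e.symm ⟨i, h⟩) else 0) = ∑ i, G i from rfl,
    h1, Finset.sum_map]
  have h2 : ∀ j : Fin m, G ((⟨Fin.castLE hcard, Fin.castLE_injective _⟩ :
      Fin m ↪ Fin N) j) = F (e.symm j) := by
    intro j
    have hj : ((Fin.castLE hcard j : Fin N) : ℕ) < m := j.2
    simp only [Function.Embedding.coeFn_mk, hG, dif_pos hj]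
    congr
  rw [Finset.sum_congr rfl fun j _ => h2 j]
  exact Equiv.sum_comp e.symm F

lemma my_isCompact_convexHull {E : Type*} [NormedAddCommGroup E] [NormedSpace ℝ E]
    [FiniteDimensional ℝ E] {S : Set E} (hS : IsCompact S) (hne : S.Nonempty) :
    IsCompact (convexHull ℝ S) := by
  classical
  obtain ⟨s₀, hs₀⟩ := hne
  set N := Module.finrank ℝ E + 1 with hN
  set φ : ((Fin N → ℝ) × (Fin N → E)) → E := fun p => ∑ i, p.1 i • p.2 i with hφ
  have hφc : Continuous φ := by
    apply continuous_finset_sum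
    intro i _
    exact ((continuous_apply i).comp continuous_fst).smul
      ((continuous_apply i).comp continuous_snd)
  have hD : IsCompact ((stdSimplex ℝ (Fin N)) ×ˢ (Set.univ.pi fun _ : Fin N => S)) :=
    (isCompact_stdSimplex (𝕜 := ℝ) (ι := Fin N)).prod (isCompact_univ_pi fun _ => hS)
  have key : convexHull ℝ S
      = φ '' ((stdSimplex ℝ (Fin N)) ×ˢ (Set.univ.pi fun _ : Fin N => S)) := by
    apply Set.Subset.antisymm
    · intro x hx
      obtain ⟨ι, hι, z, w, hzS, hai, hw0, hw1, hx⟩ := eq_pos_convex_span_of_mem_convexHull hx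
      have hcard : Fintype.card ι ≤ N := by
        have h1 := hai.card_le_finrank_succ
        exact h1.trans (Nat.add_le_add_right (Submodule.finrank_le _) 1)
      set m := Fintype.card ι with hm
      set e := (Fintype.equivFin ι) with he
      set p : Fin N → E := fun i => if h : (i : ℕ) < m then z (e.symm ⟨i, h⟩) else s₀ with hp
      set w' : Fin N → ℝ := fun i => if h : (i : ℕ) < m then w (e.symm ⟨i, h⟩) else 0 with hw'
      refine ⟨(w', p), ⟨⟨?_, ?_⟩, ?_⟩, ?_⟩
      · intro i
        simp only [hw']
        split
        · exact (hw0 _).le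
        · exact le_rfl
      · show ∑ i : Fin N, w' i = 1
        rw [show (∑ i : Fin N, w' i)
          = ∑ i : Fin N, (if h : (i : ℕ) < m then w (e.symm ⟨i, h⟩) else 0) from rfl,
          pad_sum hcard w, hw1]
      · intro i _
        simp only [hp]
        split
        · exact hzS (Set.mem_range_self _)
        · exact hs₀
      · have hterm : ∀ i : Fin N, w' i • p i
            = if h : (i : ℕ) < m then (fun j => w j • z j) (e.symm ⟨i, h⟩) else 0 := by
          intro i
          by_cases h : (i : ℕ) < m
          · simp only [hw', hp, dif_pos h]
          · simp only [hw', hp, dif_neg h, zero_smul]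
        show ∑ i : Fin N, w' i • p i = x
        rw [Finset.sum_congr rfl fun i _ => hterm i, pad_sum hcard (fun j => w j • z j), hx]
    · rintro x ⟨⟨w, p⟩, ⟨hw, hpS⟩, rfl⟩
      have h1 : ∑ i, w i = 1 := hw.2
      have h2 := Finset.centerMass_mem_convexHull (R := ℝ) Finset.univ
        (fun i _ => hw.1 i) (by rw [h1]; norm_num) (fun i _ => hpS i (Set.mem_univ i))
      rwa [Finset.centerMass_eq_of_sum_1 _ _ h1] at h2
  rw [key]
  exact hD.image hφc

lemma coord_le_sum {n : ℕ} (α : Fin n →₀ ℕ) (i : Fin n) : α i ≤ α.sum fun _ k => k := by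
  rcases eq_or_ne (α i) 0 with h | h
  · simp [h]
  · exact Finset.single_le_sum (f := fun j => α j) (fun j _ => Nat.zero_le _)
      (Finsupp.mem_support_iff.2 h)

noncomputable instance fintypeI (n d : ℕ) :
    Fintype {α : Fin n →₀ ℕ // (α.sum fun _ k => k) ≤ d} := by
  apply Fintype.ofInjective (β := Fin n → Fin (d + 1))
    (fun α i => ⟨α.1 i, Nat.lt_succ_of_le ((coord_le_sum α.1 i).trans α.2)⟩)
  intro α β h
  ext i
  exact congrArg Fin.val (congrFun h i)

lemma continuous_monVec (n d : ℕ) : Continuous (monVec n d) := by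
  apply continuous_pi
  intro α
  exact continuous_finset_prod _ fun i _ => (continuous_apply i).pow _

section cone
variable {n d : ℕ} {T : Set (Fin n → ℝ)}

lemma zero_mem_MomentCone : (0 : _) ∈ MomentCone n d T :=
  ⟨0, fun i => 0, fun i => 0, fun i => le_rfl, fun i => i.elim0, by simp⟩

lemma monVec_mem_MomentCone {u : Fin n → ℝ} (hu : u ∈ T) :
    monVec n d u ∈ MomentCone n d T :=
  ⟨1, fun _ => 1, fun _ => u, fun _ => zero_le_one, fun _ => hu, by simp⟩

lemma smul_mem_MomentCone {t : ℝ} (ht : 0 ≤ t) {y} (hy : y ∈ MomentCone n d T) :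
    t • y ∈ MomentCone n d T := by
  obtain ⟨M, lam, pts, h0, hT, rfl⟩ := hy
  exact ⟨M, fun i => t * lam i, pts, fun i => mul_nonneg ht (h0 i), hT, by
    rw [Finset.smul_sum]; simp [smul_smul]⟩

lemma add_mem_MomentCone {y z} (hy : y ∈ MomentCone n d T) (hz : z ∈ MomentCone n d T) :
    y + z ∈ MomentCone n d T := by
  obtain ⟨M, lam, pts, h0, hT', rfl⟩ := hy
  obtain ⟨M', lam', pts', h0', hT'', rfl⟩ := hz
  refine ⟨M + M', Fin.append lam lam', Fin.append pts pts', ?_, ?_, ?_⟩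
  · intro i
    refine Fin.addCases (fun j => ?_) (fun j => ?_) i
    · rw [Fin.append_left]; exact h0 j
    · rw [Fin.append_right]; exact h0' j
  · intro i
    refine Fin.addCases (fun j => ?_) (fun j => ?_) i
    · rw [Fin.append_left]; exact hT' j
    · rw [Fin.append_right]; exact hT'' j
  · rw [Fin.sum_univ_add]
    simp only [Fin.append_left, Fin.append_right]

lemma convex_MomentCone : Convex ℝ (MomentCone n d T) := by
  intro y hy z hz a b ha hb _
  exact add_mem_MomentCone (smul_mem_MomentCone ha hy) (smul_mem_MomentCone hb hz)

/-- the index with α = 0 -/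
def idx0 (n d : ℕ) : {α : Fin n →₀ ℕ // (α.sum fun _ k => k) ≤ d} :=
  ⟨0, by simp⟩

lemma monVec_idx0 (u : Fin n → ℝ) : monVec n d u (idx0 n d) = 1 := by
  simp [monVec, idx0]

end cone

section closed
variable {n d : ℕ} {T : Set (Fin n → ℝ)}

lemma cone_eq (hTne : T.Nonempty) :
    MomentCone n d T
      = {y | ∃ t : ℝ, 0 ≤ t ∧ ∃ z ∈ convexHull ℝ (monVec n d '' T), y = t • z} := by
  apply Set.Subset.antisymm
  · rintro y ⟨M, lam, pts, h0, hTm, rfl⟩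
    rcases eq_or_lt_of_le (Finset.sum_nonneg (fun i (_ : i ∈ Finset.univ) => h0 i)) with ht | ht
    · -- total mass zero: all lam are 0
      obtain ⟨u₀, hu₀⟩ := hTne
      refine ⟨(0:ℝ), le_rfl, monVec n d u₀,
        subset_convexHull ℝ _ ⟨u₀, hu₀, rfl⟩, ?_⟩
      have hall : ∀ i ∈ Finset.univ, lam i = 0 :=
        (Finset.sum_eq_zero_iff_of_nonneg (fun i _ => h0 i)).1 ht.symm
      rw [Finset.sum_congr rfl fun i hi => by rw [hall i hi, zero_smul], Finset.sum_const_zero,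
        zero_smul]
    · refine ⟨∑ i, lam i, ht.le, Finset.centerMass Finset.univ lam (fun i => monVec n d (pts i)),
        Finset.centerMass_mem_convexHull _ (fun i _ => h0 i) ht
          (fun i _ => ⟨pts i, hTm i, rfl⟩), ?_⟩
      rw [Finset.centerMass, smul_smul, mul_inv_cancel₀ ht.ne', one_smul]
  · rintro y ⟨t, ht, z, hz, rfl⟩
    have hsub : convexHull ℝ (monVec n d '' T) ⊆ MomentCone n d T := by
      apply convexHull_min
      · rintro _ ⟨u, hu, rfl⟩
        exact monVec_mem_MomentCone hu
      · exact convex_MomentCone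
    exact smul_mem_MomentCone ht (hsub hz)

lemma isClosed_MomentCone (hT : IsCompact T) (hTne : T.Nonempty) :
    IsClosed (MomentCone n d T) := by
  rw [cone_eq hTne]
  set S := monVec n d '' T with hS
  set K := convexHull ℝ S with hKdef
  have hK : IsCompact K := my_isCompact_convexHull (hT.image (continuous_monVec n d))
    (hTne.image _)
  have hK1 : ∀ z ∈ K, z (idx0 n d) = 1 := by
    intro z hz
    have : K ⊆ {z | z (idx0 n d) = 1} := by
      apply convexHull_min
      · rintro _ ⟨u, _, rfl⟩
        exact monVec_idx0 u
      · intro x hx y hy a b ha hb hab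
        show (a • x + b • y) (idx0 n d) = 1
        simp only [Pi.add_apply, Pi.smul_apply, smul_eq_mul, hx.out, hy.out, mul_one]
        exact hab
    exact this hz
  set A := {y : {α : Fin n →₀ ℕ // (α.sum fun _ k => k) ≤ d} → ℝ |
    ∃ t : ℝ, 0 ≤ t ∧ ∃ z ∈ K, y = t • z} with hA
  apply isClosed_of_closure_subset
  intro y hy
  set c := y (idx0 n d) + 1 with hc
  have hU : IsOpen {w : {α : Fin n →₀ ℕ // (α.sum fun _ k => k) ≤ d} → ℝ | w (idx0 n d) < c} :=
    isOpen_Iio.preimage (continuous_apply _)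
  have hyU : y ∈ {w | w (idx0 n d) < c} := by
    show y (idx0 n d) < y (idx0 n d) + 1
    linarith
  have hy2 : y ∈ closure ({w | w (idx0 n d) < c} ∩ A) := hU.inter_closure ⟨hyU, hy⟩
  set B := (fun q : ℝ × ({α : Fin n →₀ ℕ // (α.sum fun _ k => k) ≤ d} → ℝ) => q.1 • q.2) ''
    (Set.Icc (0:ℝ) c ×ˢ K) with hB
  have hBc : IsCompact B := (isCompact_Icc.prod hK).image (continuous_fst.smul continuous_snd)
  have hsub : {w | w (idx0 n d) < c} ∩ A ⊆ B := by
    rintro w ⟨hw1, t, ht, z, hz, rfl⟩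
    refine ⟨(t, z), ⟨⟨ht, ?_⟩, hz⟩, rfl⟩
    have : (t • z) (idx0 n d) = t := by
      simp only [Pi.smul_apply, smul_eq_mul, hK1 z hz, mul_one]
    rw [Set.mem_setOf_eq, this] at hw1
    exact hw1.le
  have : y ∈ B := hBc.isClosed.closure_subset ((closure_mono hsub) hy2)
  obtain ⟨⟨t, z⟩, ⟨⟨ht0, _⟩, hz⟩, rfl⟩ := this
  exact ⟨t, ht0, z, hz, rfl⟩

end closed

section pairinglemmas
variable {n d : ℕ}

lemma pairing_sum_smul (f : MvPolynomial (Fin n) ℝ) {M : ℕ} (lam : Fin M → ℝ)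
    (v : Fin M → ({α : Fin n →₀ ℕ // (α.sum fun _ k => k) ≤ d} → ℝ)) :
    pairing n d f (∑ i, lam i • v i) = ∑ i, lam i * pairing n d f (v i) := by
  rw [pairing]
  have key : ∀ α ∈ f.support, MvPolynomial.coeff α f *
      (if h : (α.sum fun _ k => k) ≤ d then (∑ i, lam i • v i) ⟨α, h⟩ else 0)
      = ∑ i, lam i * (MvPolynomial.coeff α f *
        (if h : (α.sum fun _ k => k) ≤ d then v i ⟨α, h⟩ else 0)) := by
    intro α _
    by_cases h : (α.sum fun _ k => k) ≤ d
    · simp only [dif_pos h, Finset.sum_apply, Pi.smul_apply, smul_eq_mul, Finset.mul_sum]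
      exact Finset.sum_congr rfl fun i _ => by ring
    · simp [dif_neg h]
  rw [Finset.sum_congr rfl key, Finset.sum_comm]
  simp only [pairing, Finset.mul_sum]

lemma pairing_monVec {f : MvPolynomial (Fin n) ℝ} (hf : f.totalDegree ≤ d) (u : Fin n → ℝ) :
    pairing n d f (monVec n d u) = MvPolynomial.eval u f := by
  rw [pairing, MvPolynomial.eval_eq']
  refine Finset.sum_congr rfl fun α hα => ?_
  rw [dif_pos ((MvPolynomial.le_totalDegree hα).trans hf)]
  rfl

lemma pairing_eq_sum {g : MvPolynomial (Fin n) ℝ} (hg : g.totalDegree ≤ d)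
    (y : {α : Fin n →₀ ℕ // (α.sum fun _ k => k) ≤ d} → ℝ) :
    pairing n d g y
      = ∑ β : {α : Fin n →₀ ℕ // (α.sum fun _ k => k) ≤ d}, MvPolynomial.coeff β.1 g * y β := by
  classical
  set F : (Fin n →₀ ℕ) → ℝ := fun α => MvPolynomial.coeff α g *
    (if h : (α.sum fun _ k => k) ≤ d then y ⟨α, h⟩ else 0) with hF
  have h1 : ∑ β : {α : Fin n →₀ ℕ // (α.sum fun _ k => k) ≤ d}, MvPolynomial.coeff β.1 g * y β
      = ∑ β : {α : Fin n →₀ ℕ // (α.sum fun _ k => k) ≤ d}, F β.1 := by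
    refine Finset.sum_congr rfl fun β _ => ?_
    rw [hF]
    simp only [dif_pos β.2]
  have h2 : ∑ β : {α : Fin n →₀ ℕ // (α.sum fun _ k => k) ≤ d}, F β.1
      = ∑ α ∈ Finset.univ.image
          (Subtype.val : {α : Fin n →₀ ℕ // (α.sum fun _ k => k) ≤ d} → _), F α :=
    (Finset.sum_image (fun β _ γ _ h => Subtype.ext h)).symm
  have h3 : pairing n d g y
      = ∑ α ∈ Finset.univ.image
          (Subtype.val : {α : Fin n →₀ ℕ // (α.sum fun _ k => k) ≤ d} → _), F α := by
    rw [pairing]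
    refine Finset.sum_subset ?_ ?_
    · intro α hα
      exact Finset.mem_image.2 ⟨⟨α, (MvPolynomial.le_totalDegree hα).trans hg⟩,
        Finset.mem_univ _, rfl⟩
    · intro α _ hα
      simp [hF, MvPolynomial.notMem_support_iff.1 hα]
  rw [h1, h2, h3]

end pairinglemmas

theorem stmt15 {n d : ℕ} (hd : 0 < d) (T : Set (Fin n → ℝ))
    (hT : IsCompact T) (hTne : T.Nonempty) :
    ∀ y : {α : Fin n →₀ ℕ // (α.sum fun _ k => k) ≤ d} → ℝ,
      y ∈ MomentCone n d T ↔
      ∀ f : MvPolynomial (Fin n) ℝ, f.totalDegree ≤ d →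
        (∀ u ∈ T, 0 ≤ MvPolynomial.eval u f) → 0 ≤ pairing n d f y := by
  intro y
  constructor
  · rintro ⟨M, lam, pts, h0, hTm, rfl⟩ f hdeg hpos
    rw [pairing_sum_smul]
    refine Finset.sum_nonneg fun i _ => mul_nonneg (h0 i) ?_
    rw [pairing_monVec hdeg]
    exact hpos _ (hTm i)
  · intro hy
    by_contra hnot
    obtain ⟨f, u, hfy, hfb⟩ := geometric_hahn_banach_point_closed
      (convex_MomentCone (n := n) (d := d) (T := T)) (isClosed_MomentCone hT hTne) hnot
    have hu0 : u < 0 := by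
      have := hfb 0 zero_mem_MomentCone
      simpa using this
    have hfnn : ∀ b ∈ MomentCone n d T, 0 ≤ f b := by
      intro b hb
      by_contra hfb'
      push_neg at hfb'
      have ht : 0 < 2 * u / f b := div_pos_of_neg_of_neg (by linarith) hfb'
      have h2 := hfb ((2 * u / f b) • b) (smul_mem_MomentCone ht.le hb)
      rw [map_smul, smul_eq_mul, div_mul_cancel₀ _ hfb'.ne] at h2
      linarith
    set c : {α : Fin n →₀ ℕ // (α.sum fun _ k => k) ≤ d} → ℝ :=
      fun β => f (Pi.single β 1) with hc
    set g : MvPolynomial (Fin n) ℝ :=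
      ∑ β : {α : Fin n →₀ ℕ // (α.sum fun _ k => k) ≤ d}, MvPolynomial.monomial β.1 (c β) with hg
    have hcoeff : ∀ β : {α : Fin n →₀ ℕ // (α.sum fun _ k => k) ≤ d},
        MvPolynomial.coeff β.1 g = c β := by
      intro β
      rw [hg, MvPolynomial.coeff_sum]
      have hite : ∀ γ : {α : Fin n →₀ ℕ // (α.sum fun _ k => k) ≤ d},
          (if (γ.1 : Fin n →₀ ℕ) = β.1 then c γ else 0) = if γ = β then c γ else 0 := by
        intro γ
        by_cases h : γ = β
        · rw [if_pos h, if_pos (by rw [h])]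
        · rw [if_neg h, if_neg fun hh => h (Subtype.ext hh)]
      simp only [MvPolynomial.coeff_monomial]
      rw [Finset.sum_congr rfl fun γ _ => hite γ, Finset.sum_ite_eq' Finset.univ β c,
        if_pos (Finset.mem_univ β)]
    have hdeg : g.totalDegree ≤ d := by
      refine le_trans (MvPolynomial.totalDegree_finset_sum _ _) (Finset.sup_le fun β _ => ?_)
      exact le_trans (MvPolynomial.totalDegree_monomial_le _ _) β.2
    have hlin : ∀ v : {α : Fin n →₀ ℕ // (α.sum fun _ k => k) ≤ d} → ℝ,
        f v = ∑ β, v β * c β := by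
      intro v
      conv_lhs => rw [← Finset.univ_sum_single v]
      rw [map_sum]
      refine Finset.sum_congr rfl fun β _ => ?_
      have h1 : Pi.single (M := fun _ : {α : Fin n →₀ ℕ // (α.sum fun _ k => k) ≤ d} => ℝ)
          β (v β) = v β • Pi.single (M := fun _ : {α : Fin n →₀ ℕ // (α.sum fun _ k => k) ≤ d} => ℝ) β 1 := by
        rw [← Pi.single_smul, smul_eq_mul, mul_one]
      rw [h1, map_smul, smul_eq_mul, hc]
    have heval : ∀ u' : Fin n → ℝ, MvPolynomial.eval u' g = f (monVec n d u') := by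
      intro u'
      rw [hg, map_sum, hlin (monVec n d u')]
      refine Finset.sum_congr rfl fun β _ => ?_
      rw [MvPolynomial.eval_monomial, Finsupp.prod_pow, mul_comm]
      rfl
    have hpair : pairing n d g y = f y := by
      rw [pairing_eq_sum hdeg, hlin y]
      exact Finset.sum_congr rfl fun β _ => by rw [hcoeff β]; ring
    have hineq := hy g hdeg fun u' hu' => by
      rw [heval u']
      exact hfnn _ (monVec_mem_MomentCone hu')
    rw [hpair] at hineq
    linarith
end
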